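/- If y : (0,∞) → ℝ is twice differentiable, nonvanishing, and satisfies y'' = (y')²/y − y'/t + (2n+1+α)y²/t² + y³/t² + α/t − 1/y on (0,∞), then the function X(t) := t/y(t) satisfies X'' = (X')²/X − X'/t − αX²/t² − (2n+1+α)/t + X³/t² − 1/X on (0,∞). -/

import Mathlib

open Real

theorem painleve_transform_y_to_X (α n : ℝ) (y : ℝ → ℝ)
    (hy1 : ∀ t ∈ Set.Ioi (0 : ℝ), DifferentiableAt ℝ y t)
    (hy2 : ∀ t ∈ Set.Ioi (0 : ℝ), DifferentiableAt ℝ (deriv y) t)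
    (hy0 : ∀ t ∈ Set.Ioi (0 : ℝ), y t ≠ 0)
    (hode : ∀ t ∈ Set.Ioi (0 : ℝ), deriv (deriv y) t =
      (deriv y t) ^ 2 / y t - deriv y t / t + (2 * n + 1 + α) * (y t) ^ 2 / t ^ 2
        + (y t) ^ 3 / t ^ 2 + α / t - 1 / y t) :
    ∀ t ∈ Set.Ioi (0 : ℝ),
      deriv (deriv (fun u => u / y u)) t =
        (deriv (fun u => u / y u) t) ^ 2 / (t / y t) - deriv (fun u => u / y u) t / t
          - α * (t / y t) ^ 2 / t ^ 2 - (2 * n + 1 + α) / t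
          + (t / y t) ^ 3 / t ^ 2 - 1 / (t / y t) := by
  have key : ∀ u ∈ Set.Ioi (0 : ℝ),
      deriv (fun v => v / y v) u = (y u - u * deriv y u) / (y u) ^ 2 := by
    intro u hu
    have h := (hasDerivAt_id u).fun_div (hy1 u hu).hasDerivAt (hy0 u hu)
    simp only [id_eq] at h
    rw [h.deriv]
    ring_nf
  intro t ht
  have ht0 : (0 : ℝ) < t := ht
  have hyt := hy0 t ht
  have heq : deriv (deriv (fun v => v / y v)) t
      = deriv (fun u => (y u - u * deriv y u) / (y u) ^ 2) t := by
    apply Filter.EventuallyEq.deriv_eq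
    filter_upwards [isOpen_Ioi.mem_nhds ht] with u hu
    exact key u hu
  have hN : HasDerivAt (fun u => y u - u * deriv y u)
      (deriv y t - (1 * deriv y t + t * deriv (deriv y) t)) t :=
    (hy1 t ht).hasDerivAt.sub ((hasDerivAt_id t).mul (hy2 t ht).hasDerivAt)
  have hD : HasDerivAt (fun u => (y u) ^ 2) (2 * y t * deriv y t) t := by
    simpa using (hy1 t ht).hasDerivAt.fun_pow 2
  have hg := hN.fun_div hD (pow_ne_zero 2 hyt)
  rw [heq, hg.deriv, key t ht, hode t ht]
  field_simp
  ring
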